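/- Suppose nonnegative reals C'_k, p_j (j ∈ N, N a finite set), and η_j ∈ [0,1] satisfy C'_k ≥ Σ_{j∈N} η_j p_j/2, and for every α ∈ (0,1] a number C_k^α satisfies C_k^α ≤ C'_k + Σ_{j: η_j ≥ α} (1 + (α−η_j)/2) p_j. Then the expectation of C_k^α when α is drawn from (0,1] with density f(α) = e^(α/2)/(2(√e−1)) is at most (√e/(√e−1)) · C'_k. -/

import Mathlib

set_option maxHeartbeats 1000000

open Real MeasureTheory Set intervalIntegral

lemma sqrt_exp_one_eq : Real.sqrt (Real.exp 1) = Real.exp (1/2) := by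
  rw [show Real.exp 1 = Real.exp (1/2) ^ 2 by rw [sq, ← Real.exp_add]; norm_num]
  exact Real.sqrt_sq (Real.exp_nonneg _)

lemma one_lt_sqrt_exp_one : 1 < Real.sqrt (Real.exp 1) := by
  rw [sqrt_exp_one_eq]
  have := Real.add_one_le_exp (1/2 : ℝ)
  linarith

lemma key_integral (c : ℝ) :
    ∫ α in (0:ℝ)..c, Real.exp (α/2) * (1 + (α - c)/2) = c := by
  have h : ∀ α ∈ Set.uIcc (0:ℝ) c, HasDerivAt (fun x => Real.exp (x/2) * (x - c))
      (Real.exp (α/2) * (1 + (α - c)/2)) α := by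
    intro α _
    have h1 : HasDerivAt (fun x : ℝ => Real.exp (x/2)) (Real.exp (α/2) * (1/2)) α := by
      simpa [Function.comp_def] using (Real.hasDerivAt_exp (α/2)).comp α ((hasDerivAt_id α).div_const 2)
    have h2 : HasDerivAt (fun x : ℝ => x - c) 1 α := (hasDerivAt_id α).sub_const c
    have h3 : HasDerivAt (fun x => Real.exp (x/2) * (x - c)) _ α := h1.mul h2
    convert h3 using 1; ring
  have hi : IntervalIntegrable (fun α => Real.exp (α/2) * (1 + (α - c)/2)) volume 0 c :=
    Continuous.intervalIntegrable (by continuity) 0 c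
  rw [intervalIntegral.integral_eq_sub_of_hasDerivAt h hi]
  simp

lemma exp_half_integral : ∫ α in (0:ℝ)..1, Real.exp (α/2) = 2 * (Real.exp (1/2) - 1) := by
  have h : ∀ α ∈ Set.uIcc (0:ℝ) 1, HasDerivAt (fun x => 2 * Real.exp (x/2))
      (Real.exp (α/2)) α := by
    intro α _
    have h1 : HasDerivAt (fun x : ℝ => Real.exp (x/2)) (Real.exp (α/2) * (1/2)) α := by
      simpa [Function.comp_def] using (Real.hasDerivAt_exp (α/2)).comp α ((hasDerivAt_id α).div_const 2)
    have h3 : HasDerivAt (fun x => 2 * Real.exp (x/2)) _ α := h1.const_mul 2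
    convert h3 using 1; ring
  have hi : IntervalIntegrable (fun α => Real.exp (α/2)) volume 0 1 :=
    Continuous.intervalIntegrable (by continuity) 0 1
  rw [intervalIntegral.integral_eq_sub_of_hasDerivAt h hi]
  simp; ring

theorem expected_completion_time_bound {ι : Type*} (N : Finset ι)
    (p η : ι → ℝ) (C' : ℝ) (Ck : ℝ → ℝ)
    (hC' : 0 ≤ C') (hp : ∀ j ∈ N, 0 ≤ p j)
    (hη : ∀ j ∈ N, η j ∈ Set.Icc (0:ℝ) 1)
    (hlb : ∑ j ∈ N, η j * p j / 2 ≤ C')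
    (hub : ∀ α ∈ Set.Ioc (0:ℝ) 1,
      Ck α ≤ C' + ∑ j ∈ N.filter (fun j => α ≤ η j), (1 + (α - η j) / 2) * p j)
    (hint : IntervalIntegrable
      (fun α => (Real.exp (α / 2) / (2 * (Real.sqrt (Real.exp 1) - 1))) * Ck α)
      MeasureTheory.volume 0 1) :
    ∫ α in (0:ℝ)..1, (Real.exp (α / 2) / (2 * (Real.sqrt (Real.exp 1) - 1))) * Ck α
      ≤ (Real.sqrt (Real.exp 1) / (Real.sqrt (Real.exp 1) - 1)) * C' := by
  classical
  set s := Real.sqrt (Real.exp 1) with hs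
  have hs1 : 1 < s := one_lt_sqrt_exp_one
  set K := 2 * (s - 1) with hK
  have hKpos : 0 < K := by simp only [hK]; linarith
  -- the majorant function
  set G : ℝ → ℝ := fun α =>
    (Real.exp (α/2) / K) * C' +
      ∑ j ∈ N, Set.indicator {x : ℝ | x ≤ η j}
        (fun x => (Real.exp (x/2) / K) * ((1 + (x - η j)/2) * p j)) α with hG
  -- each indicator summand is interval integrable
  have hind : ∀ j ∈ N, IntervalIntegrable
      (Set.indicator {x : ℝ | x ≤ η j}
        (fun x => (Real.exp (x/2) / K) * ((1 + (x - η j)/2) * p j))) volume 0 1 := by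
    intro j _
    have hc0 : Continuous fun x : ℝ => Real.exp (x/2) :=
      Real.continuous_exp.comp (continuous_id.div_const 2)
    have hcont : Continuous (fun x : ℝ => (Real.exp (x/2) / K) * ((1 + (x - η j)/2) * p j)) :=
      (hc0.div_const K).mul (((continuous_const.add ((continuous_id.sub continuous_const).div_const 2)).mul continuous_const))
    have hmeas : MeasurableSet {x : ℝ | x ≤ η j} := measurableSet_Iic
    rw [intervalIntegrable_iff]
    exact (hcont.integrableOn_uIoc).indicator hmeas
  have hc0 : Continuous fun x : ℝ => Real.exp (x/2) :=
    Real.continuous_exp.comp (continuous_id.div_const 2)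
  have hsumInt : IntervalIntegrable (fun α : ℝ => ∑ j ∈ N,
      Set.indicator {x : ℝ | x ≤ η j}
        (fun x => (Real.exp (x/2) / K) * ((1 + (x - η j)/2) * p j)) α) volume 0 1 := by
    have h := IntervalIntegrable.sum N hind
    have he : (fun α : ℝ => ∑ j ∈ N,
        Set.indicator {x : ℝ | x ≤ η j}
          (fun x => (Real.exp (x/2) / K) * ((1 + (x - η j)/2) * p j)) α) =
        ∑ j ∈ N, Set.indicator {x : ℝ | x ≤ η j}
          (fun x => (Real.exp (x/2) / K) * ((1 + (x - η j)/2) * p j)) := by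
      funext α; simp
    rwa [he]
  have hGint : IntervalIntegrable G volume 0 1 := by
    rw [hG]
    apply IntervalIntegrable.add
    · exact Continuous.intervalIntegrable ((hc0.div_const K).mul continuous_const) 0 1
    · exact hsumInt
  -- pointwise bound on Ioc 0 1
  have hptwise : ∀ α ∈ Set.Ioc (0:ℝ) 1,
      (Real.exp (α / 2) / K) * Ck α ≤ G α := by
    intro α hα
    have h1 := hub α hα
    have hf0 : 0 ≤ Real.exp (α/2) / K := div_nonneg (Real.exp_nonneg _) hKpos.le
    calc (Real.exp (α / 2) / K) * Ck α
        ≤ (Real.exp (α / 2) / K) *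
          (C' + ∑ j ∈ N.filter (fun j => α ≤ η j), (1 + (α - η j) / 2) * p j) :=
          mul_le_mul_of_nonneg_left h1 hf0
      _ = G α := by
          simp only [hG, Finset.sum_filter, mul_add, Finset.mul_sum]
          congr 1
          apply Finset.sum_congr rfl
          intro j _
          by_cases h : α ≤ η j
          · simp [Set.indicator_apply, h]
          · simp [Set.indicator_apply, h]
  -- integral mono
  have hmono : ∫ α in (0:ℝ)..1, (Real.exp (α / 2) / K) * Ck α ≤ ∫ α in (0:ℝ)..1, G α := by
    apply intervalIntegral.integral_mono_ae_restrict (by norm_num) hint hGint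
    have h1 : ∀ᵐ α ∂(volume.restrict (Set.Icc (0:ℝ) 1)), α ∈ Set.Icc (0:ℝ) 1 :=
      ae_restrict_mem measurableSet_Icc
    have h2 : ∀ᵐ (α : ℝ) ∂(volume.restrict (Set.Icc (0:ℝ) 1)), α ≠ 0 := by
      refine ae_restrict_of_ae ?_
      rw [ae_iff]
      have h0 : (volume : Measure ℝ) {(0:ℝ)} = 0 := Real.volume_singleton
      convert h0 using 2
      ext x; simp
    filter_upwards [h1, h2] with α hα hα0
    exact hptwise α ⟨lt_of_le_of_ne hα.1 (Ne.symm hα0), hα.2⟩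
  -- compute ∫ G
  have hGval : ∫ α in (0:ℝ)..1, G α = C' + ∑ j ∈ N, p j * η j / K := by
    rw [hG]
    rw [intervalIntegral.integral_add (f := fun α => Real.exp (α/2) / K * C') (Continuous.intervalIntegrable ((hc0.div_const K).mul continuous_const) 0 1)
      hsumInt]
    congr 1
    · have : (fun α : ℝ => Real.exp (α/2) / K * C') = fun α => (C'/K) * Real.exp (α/2) := by
        funext α; ring
      rw [this, intervalIntegral.integral_const_mul, exp_half_integral]
      rw [hK, hs, sqrt_exp_one_eq]
      have h1 : (1:ℝ) < Real.exp (1/2) := by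
        have := Real.add_one_le_exp (1/2 : ℝ); linarith
      have hne : 2 * (Real.exp (1/2) - 1) ≠ 0 := ne_of_gt (by linarith)
      field_simp
      exact mul_div_cancel_right₀ C' (by linarith : Real.exp (1/2) - 1 ≠ 0)
    · rw [intervalIntegral.integral_finset_sum hind]
      apply Finset.sum_congr rfl
      intro j hj
      have hηj := hη j hj
      rw [intervalIntegral.integral_indicator hηj]
      have : (fun x : ℝ => Real.exp (x/2) / K * ((1 + (x - η j)/2) * p j)) =
          fun x => (p j / K) * (Real.exp (x/2) * (1 + (x - η j)/2)) := by
        funext x; ring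
      rw [this, intervalIntegral.integral_const_mul, key_integral]
      ring
  -- final arithmetic
  have hsum : ∑ j ∈ N, p j * η j / K = (∑ j ∈ N, η j * p j / 2) / (s - 1) := by
    rw [Finset.sum_div]
    apply Finset.sum_congr rfl
    intro j _
    rw [hK]; field_simp
  have hfinal : C' + ∑ j ∈ N, p j * η j / K ≤ s / (s - 1) * C' := by
    rw [hsum]
    have hpos : (0:ℝ) < s - 1 := by linarith
    have hne : s - 1 ≠ 0 := ne_of_gt hpos
    have h2 : (∑ j ∈ N, η j * p j / 2) / (s - 1) ≤ C' / (s - 1) := by gcongr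
    have h3 : s / (s - 1) * C' = C' + C' / (s - 1) := by field_simp; ring
    rw [h3]
    linarith
  calc ∫ α in (0:ℝ)..1, (Real.exp (α / 2) / K) * Ck α
      ≤ ∫ α in (0:ℝ)..1, G α := hmono
    _ = C' + ∑ j ∈ N, p j * η j / K := hGval
    _ ≤ s / (s - 1) * C' := hfinal
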